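/- arXiv:1403.7019 — 2 statements merged into one kernel-verified Lean document; each statement's English description precedes it below -/
import Mathlib

section
/- Let η : ℝ → ℝ^m and V : ℝ → ℝⁿ be differentiable and satisfy η'(t) = v(t) and T·V'(t) = −E(η(t))·V(t) + Ē_fd for all t, where v : ℝ → ℝ^m. Let (η̄, V̄) be constants with E(η̄)·V̄ = Ē_fd. Then for all t, d/dt W₂(η(t), V(t)) = −(E(η(t))V(t) − Ē_fd)ᵀ·T⁻¹·(E(η(t))V(t) − Ē_fd) + (Γ(V(t))sin(η(t)) − Γ(V̄)sin(η̄))ᵀ·v(t). Hence the system η̇ = v, TV̇ = −E(η)V + Ē_fd with output λ = Γ(V)sin(η) is incrementally passive with respect to the constant equilibrium (η̄, V̄) (whose input v̄ = 0 and output λ̄ = Γ(V̄)sin(η̄)). -/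
open Matrix Real Filter Topology Set

noncomputable section

/-- `Vec n` is `ℝⁿ`. -/
abbrev Vec (n : ℕ) := Fin n → ℝ

/-- Incidence matrix of the (undirected, arbitrarily oriented) graph whose `m` edges have
endpoints `ep1 k` (positive end) and `ep2 k` (negative end). -/
def incD {n m : ℕ} (ep1 ep2 : Fin m → Fin n) : Matrix (Fin n) (Fin m) ℝ :=
  Matrix.of fun i k => if i = ep1 k then 1 else if i = ep2 k then -1 else 0

/-- `Γ(V) = diag(γ₁,…,γ_m)`, `γ_k = V_i V_j B_{ij}` for edge `k = {i,j}`. -/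
def Gam {n m : ℕ} (ep1 ep2 : Fin m → Fin n) (B : Fin m → ℝ) (V : Vec n) :
    Matrix (Fin m) (Fin m) ℝ :=
  Matrix.diagonal fun k => V (ep1 k) * V (ep2 k) * B k

/-- The matrix `E(η)`. -/
def Emat {n m : ℕ} (ep1 ep2 : Fin m → Fin n) (B : Fin m → ℝ)
    (Bii Xd Xd' : Vec n) (η : Vec m) : Matrix (Fin n) (Fin n) ℝ :=
  Matrix.of fun i j =>
    if i = j then (1 - Bii i * (Xd i - Xd' i)) / (Xd i - Xd' i)
    else -∑ k, (if (ep1 k = i ∧ ep2 k = j) ∨ (ep1 k = j ∧ ep2 k = i)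
      then B k * Real.cos (η k) else 0)

/-- The diagonal matrix `F`. -/
def Fmat {n : ℕ} (Bii Xd Xd' : Vec n) : Matrix (Fin n) (Fin n) ℝ :=
  Matrix.diagonal fun i => (1 - Bii i * (Xd i - Xd' i)) / (Xd i - Xd' i)

/-- componentwise sine -/
def sinv {m : ℕ} (η : Vec m) : Vec m := fun k => Real.sin (η k)
/-- componentwise cosine -/
def cosv {m : ℕ} (η : Vec m) : Vec m := fun k => Real.cos (η k)

/-- The storage function `W₂` with reference point `(ηb, Vb)`. -/
def W2 {n m : ℕ} (ep1 ep2 : Fin m → Fin n) (B : Fin m → ℝ) (Bii Xd Xd' : Vec n)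
    (Efd : Vec n) (ηb : Vec m) (Vb : Vec n) (η : Vec m) (V : Vec n) : ℝ :=
  -((1 : Vec m) ⬝ᵥ (Gam ep1 ep2 B V).mulVec (cosv η))
    + (1 : Vec m) ⬝ᵥ (Gam ep1 ep2 B Vb).mulVec (cosv ηb)
    - ((Gam ep1 ep2 B Vb).mulVec (sinv ηb)) ⬝ᵥ (η - ηb)
    - Efd ⬝ᵥ (V - Vb)
    + (1 / 2) * (V ⬝ᵥ (Fmat Bii Xd Xd').mulVec V)
    - (1 / 2) * (Vb ⬝ᵥ (Fmat Bii Xd Xd').mulVec Vb)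

/-- entrywise absolute value `|D|` of the incidence matrix. -/
def absD {n m : ℕ} (ep1 ep2 : Fin m → Fin n) : Matrix (Fin n) (Fin m) ℝ :=
  Matrix.of fun i k => |incD ep1 ep2 i k|

/-- The matrix `E(η̄) − diag(V̄)⁻¹|D|Γ(V̄)diag(sin η̄)diag(cos η̄)⁻¹diag(sin η̄)|D|ᵀdiag(V̄)⁻¹`
appearing in Assumption 3. -/
def Schur {n m : ℕ} (ep1 ep2 : Fin m → Fin n) (B : Fin m → ℝ) (Bii Xd Xd' : Vec n)
    (ηb : Vec m) (Vb : Vec n) : Matrix (Fin n) (Fin n) ℝ :=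
  Emat ep1 ep2 B Bii Xd Xd' ηb -
    (Matrix.diagonal fun i => (Vb i)⁻¹) * absD ep1 ep2 * Gam ep1 ep2 B Vb *
      Matrix.diagonal (sinv ηb) * (Matrix.diagonal (cosv ηb))⁻¹ *
      Matrix.diagonal (sinv ηb) * (absD ep1 ep2)ᵀ * (Matrix.diagonal fun i => (Vb i)⁻¹)


section Helpers

variable {n m : ℕ}

lemma gam_dot (ep1 ep2 : Fin m → Fin n) (B : Fin m → ℝ) (V : Vec n)
    (w u : Vec m) : (Gam ep1 ep2 B V).mulVec w ⬝ᵥ u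
      = ∑ k, V (ep1 k) * V (ep2 k) * B k * w k * u k := by
  simp [Gam, dotProduct, Matrix.mulVec_diagonal, mul_assoc]

lemma pairsum (ep1 ep2 : Fin m → Fin n) (hep : ∀ k, ep1 k ≠ ep2 k)
    (k : Fin m) (c : ℝ) (x w : Vec n) :
    (∑ i, ∑ j, (if (ep1 k = i ∧ ep2 k = j) ∨ (ep1 k = j ∧ ep2 k = i)
        then c * x j * w i else 0))
      = c * x (ep2 k) * w (ep1 k) + c * x (ep1 k) * w (ep2 k) := by
  classical
  have key : ∀ i j : Fin n, (if (ep1 k = i ∧ ep2 k = j) ∨ (ep1 k = j ∧ ep2 k = i)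
        then c * x j * w i else 0)
      = (if ep2 k = j then if ep1 k = i then c * x j * w i else 0 else 0)
        + (if ep2 k = i then if ep1 k = j then c * x j * w i else 0 else 0) := by
    intro i j
    by_cases h1 : ep1 k = i <;> by_cases h2 : ep2 k = j <;>
      by_cases h3 : ep1 k = j <;> by_cases h4 : ep2 k = i
    all_goals try exact absurd (h1.trans h4.symm) (hep k)
    all_goals try exact absurd (h3.trans h2.symm) (hep k)
    all_goals simp_all
  simp only [key, Finset.sum_add_distrib, Finset.sum_ite_irrel, Finset.sum_const_zero,
    Finset.sum_ite_eq, Finset.mem_univ, if_true]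

lemma emat_dot (ep1 ep2 : Fin m → Fin n) (hep : ∀ k, ep1 k ≠ ep2 k)
    (B : Fin m → ℝ) (Bii Xd Xd' : Vec n) (θ : Vec m) (x w : Vec n) :
    (Emat ep1 ep2 B Bii Xd Xd' θ).mulVec x ⬝ᵥ w
      = (∑ i, (1 - Bii i * (Xd i - Xd' i)) / (Xd i - Xd' i) * x i * w i)
        - ∑ k, B k * Real.cos (θ k)
            * (x (ep2 k) * w (ep1 k) + x (ep1 k) * w (ep2 k)) := by
  classical
  simp only [Emat, Matrix.mulVec, dotProduct, Matrix.of_apply]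
  have step1 : ∀ i : Fin n, (∑ j, (if i = j then (1 - Bii i * (Xd i - Xd' i)) / (Xd i - Xd' i)
      else -∑ k, (if (ep1 k = i ∧ ep2 k = j) ∨ (ep1 k = j ∧ ep2 k = i)
        then B k * Real.cos (θ k) else 0)) * x j) * w i
      = (1 - Bii i * (Xd i - Xd' i)) / (Xd i - Xd' i) * x i * w i
        - ∑ j, ∑ k, (if (ep1 k = i ∧ ep2 k = j) ∨ (ep1 k = j ∧ ep2 k = i)
            then B k * Real.cos (θ k) * x j * w i else 0) := by
    intro i
    rw [Finset.sum_mul]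
    have hterm : ∀ j : Fin n, ((if i = j then (1 - Bii i * (Xd i - Xd' i)) / (Xd i - Xd' i)
      else -∑ k, (if (ep1 k = i ∧ ep2 k = j) ∨ (ep1 k = j ∧ ep2 k = i)
        then B k * Real.cos (θ k) else 0)) * x j) * w i
      = (if i = j then (1 - Bii i * (Xd i - Xd' i)) / (Xd i - Xd' i) * x j * w i else 0)
        - ∑ k, (if (ep1 k = i ∧ ep2 k = j) ∨ (ep1 k = j ∧ ep2 k = i)
            then B k * Real.cos (θ k) * x j * w i else 0) := by
      intro j
      by_cases h : i = j
      · subst h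
        rw [if_pos rfl, if_pos rfl]
        have hz : ∀ k : Fin m, (if (ep1 k = i ∧ ep2 k = i) ∨ (ep1 k = i ∧ ep2 k = i)
            then B k * Real.cos (θ k) * x i * w i else 0) = 0 := fun k =>
          if_neg (by rintro (⟨h1, h2⟩ | ⟨h1, h2⟩) <;> exact hep k (h1.trans h2.symm))
        rw [Finset.sum_eq_zero fun k _ => hz k, sub_zero]
      · rw [if_neg h, if_neg h, zero_sub, neg_mul, neg_mul, ← Finset.sum_neg_distrib,
          Finset.sum_mul, Finset.sum_mul, ← Finset.sum_neg_distrib]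
        apply Finset.sum_congr rfl
        intro k _
        split_ifs <;> ring
    rw [Finset.sum_congr rfl fun j _ => hterm j, Finset.sum_sub_distrib,
      Finset.sum_ite_eq Finset.univ i
        (fun j => (1 - Bii i * (Xd i - Xd' i)) / (Xd i - Xd' i) * x j * w i),
      if_pos (Finset.mem_univ i)]
  rw [Finset.sum_congr rfl fun i _ => step1 i, Finset.sum_sub_distrib]
  congr 1
  have swap1 : ∀ i : Fin n, (∑ j, ∑ k, (if (ep1 k = i ∧ ep2 k = j) ∨ (ep1 k = j ∧ ep2 k = i)
      then B k * Real.cos (θ k) * x j * w i else 0))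
    = ∑ k, ∑ j, (if (ep1 k = i ∧ ep2 k = j) ∨ (ep1 k = j ∧ ep2 k = i)
      then B k * Real.cos (θ k) * x j * w i else 0) := fun i => Finset.sum_comm
  rw [Finset.sum_congr rfl fun i _ => swap1 i, Finset.sum_comm]
  apply Finset.sum_congr rfl
  intro k _
  rw [pairsum ep1 ep2 hep k (B k * Real.cos (θ k)) x w]
  ring

end Helpers

/-- Proposition 2: along solutions of `η̇ = v`, `TV̇ = −E(η)V + Ē_fd`,
the storage function `W₂` satisfies
`Ẇ₂ = −‖∇_V W₂‖²_{T⁻¹} + (λ − λ̄)ᵀ(v − v̄)` with `λ = Γ(V)sin(η)`, `λ̄ = Γ(V̄)sin(η̄)`,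
`v̄ = 0`; this is incremental passivity with respect to the equilibrium `(η̄, V̄)`. -/
theorem incremental_passivity_eta_V
    {n m : ℕ} (ep1 ep2 : Fin m → Fin n) (hep : ∀ k, ep1 k ≠ ep2 k)
    (B : Fin m → ℝ) (hB : ∀ k, 0 < B k)
    (Bii Xd Xd' : Vec n)
    (Td : Vec n) (hT : ∀ i, 0 < Td i)
    (Efd : Vec n)
    (η : ℝ → Vec m) (v : ℝ → Vec m) (V V' : ℝ → Vec n)
    (hη : ∀ t, HasDerivAt η (v t) t)
    (hV : ∀ t, HasDerivAt V (V' t) t)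
    (hVdyn : ∀ t, (Matrix.diagonal Td).mulVec (V' t)
      = -(Emat ep1 ep2 B Bii Xd Xd' (η t)).mulVec (V t) + Efd)
    (ηb : Vec m) (Vb : Vec n)
    (hbar : (Emat ep1 ep2 B Bii Xd Xd' ηb).mulVec Vb = Efd) :
    ∀ t, HasDerivAt (fun s => W2 ep1 ep2 B Bii Xd Xd' Efd ηb Vb (η s) (V s))
      (-(((Emat ep1 ep2 B Bii Xd Xd' (η t)).mulVec (V t) - Efd) ⬝ᵥ
          (Matrix.diagonal fun i => (Td i)⁻¹).mulVec
            ((Emat ep1 ep2 B Bii Xd Xd' (η t)).mulVec (V t) - Efd))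
        + ((Gam ep1 ep2 B (V t)).mulVec (sinv (η t))
            - (Gam ep1 ep2 B Vb).mulVec (sinv ηb)) ⬝ᵥ v t) t := by
  intro t
  have hVi : ∀ i, HasDerivAt (fun s => V s i) (V' t i) t := fun i => hasDerivAt_pi.mp (hV t) i
  have hηk : ∀ k, HasDerivAt (fun s => η s k) (v t k) t := fun k => hasDerivAt_pi.mp (hη t) k
  -- explicit form of the storage function along the solution
  have hfun : (fun s => W2 ep1 ep2 B Bii Xd Xd' Efd ηb Vb (η s) (V s))
      = fun s => -(∑ k, V s (ep1 k) * V s (ep2 k) * B k * Real.cos (η s k))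
          + (∑ k, Vb (ep1 k) * Vb (ep2 k) * B k * Real.cos (ηb k))
          - (∑ k, Vb (ep1 k) * Vb (ep2 k) * B k * Real.sin (ηb k) * (η s k - ηb k))
          - (∑ i, Efd i * (V s i - Vb i))
          + (1 / 2) * (∑ i, V s i * ((1 - Bii i * (Xd i - Xd' i)) / (Xd i - Xd' i) * V s i))
          - (1 / 2) * (∑ i, Vb i * ((1 - Bii i * (Xd i - Xd' i)) / (Xd i - Xd' i) * Vb i)) := by
    funext s
    simp only [W2, Gam, Fmat, sinv, cosv, dotProduct, Matrix.mulVec_diagonal,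
      Pi.one_apply, Pi.sub_apply, one_mul]
  -- derivative of each piece
  have h1 : HasDerivAt (fun s => ∑ k, V s (ep1 k) * V s (ep2 k) * B k * Real.cos (η s k))
      (∑ k, ((V' t (ep1 k) * V t (ep2 k) + V t (ep1 k) * V' t (ep2 k)) * B k
          * Real.cos (η t k)
        + V t (ep1 k) * V t (ep2 k) * B k * (-Real.sin (η t k) * v t k))) t :=
    HasDerivAt.fun_sum fun k _ =>
      (((hVi (ep1 k)).mul (hVi (ep2 k))).mul_const (B k)).mul ((hηk k).cos)
  have h3 : HasDerivAt (fun s => ∑ k, Vb (ep1 k) * Vb (ep2 k) * B k * Real.sin (ηb k)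
        * (η s k - ηb k))
      (∑ k, Vb (ep1 k) * Vb (ep2 k) * B k * Real.sin (ηb k) * v t k) t :=
    HasDerivAt.fun_sum fun k _ => ((hηk k).sub_const (ηb k)).const_mul _
  have h4 : HasDerivAt (fun s => ∑ i, Efd i * (V s i - Vb i))
      (∑ i, Efd i * V' t i) t :=
    HasDerivAt.fun_sum fun i _ => ((hVi i).sub_const (Vb i)).const_mul _
  have h5 : HasDerivAt (fun s => ∑ i, V s i
        * ((1 - Bii i * (Xd i - Xd' i)) / (Xd i - Xd' i) * V s i))
      (∑ i, (V' t i * ((1 - Bii i * (Xd i - Xd' i)) / (Xd i - Xd' i) * V t i)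
        + V t i * ((1 - Bii i * (Xd i - Xd' i)) / (Xd i - Xd' i) * V' t i))) t :=
    HasDerivAt.fun_sum fun i _ => (hVi i).mul ((hVi i).const_mul _)
  have H := ((((h1.neg.add_const
      (∑ k, Vb (ep1 k) * Vb (ep2 k) * B k * Real.cos (ηb k))).sub h3).sub h4).add
      (h5.const_mul (1 / 2))).sub_const
      ((1 / 2) * ∑ i, Vb i * ((1 - Bii i * (Xd i - Xd' i)) / (Xd i - Xd' i) * Vb i))
  -- the inverse of T kills the dynamics
  have hX : ∀ i, ((Emat ep1 ep2 B Bii Xd Xd' (η t)).mulVec (V t) - Efd) i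
      = -(Td i * V' t i) := by
    intro i
    have hd := congrFun (hVdyn t) i
    simp only [Matrix.mulVec_diagonal, Pi.add_apply, Pi.neg_apply] at hd
    simp only [Pi.sub_apply]
    linarith
  have hTX : (Matrix.diagonal fun i => (Td i)⁻¹).mulVec
        ((Emat ep1 ep2 B Bii Xd Xd' (η t)).mulVec (V t) - Efd) = -(V' t) := by
    funext i
    rw [Matrix.mulVec_diagonal, hX i, Pi.neg_apply]
    field_simp [(hT i).ne']
  -- identify the claimed derivative with the computed one
  have hsplit : (∑ k, ((V' t (ep1 k) * V t (ep2 k) + V t (ep1 k) * V' t (ep2 k)) * B k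
          * Real.cos (η t k)
        + V t (ep1 k) * V t (ep2 k) * B k * (-Real.sin (η t k) * v t k)))
      = (∑ k, B k * Real.cos (η t k)
          * (V t (ep2 k) * V' t (ep1 k) + V t (ep1 k) * V' t (ep2 k)))
        - ∑ k, V t (ep1 k) * V t (ep2 k) * B k * Real.sin (η t k) * v t k := by
    rw [← Finset.sum_sub_distrib]
    exact Finset.sum_congr rfl fun k _ => by ring
  have hhalf : (1 / 2 : ℝ) * (∑ i, (V' t i
          * ((1 - Bii i * (Xd i - Xd' i)) / (Xd i - Xd' i) * V t i)
        + V t i * ((1 - Bii i * (Xd i - Xd' i)) / (Xd i - Xd' i) * V' t i)))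
      = ∑ i, (1 - Bii i * (Xd i - Xd' i)) / (Xd i - Xd' i) * V t i * V' t i := by
    rw [Finset.mul_sum]
    exact Finset.sum_congr rfl fun i _ => by ring
  have hEfd : Efd ⬝ᵥ V' t = ∑ i, Efd i * V' t i := rfl
  rw [hfun]
  convert H using 1
  case e'_4 => rfl
  case e'_5 => rfl
  case e'_8 => rfl
  rw [hTX, dotProduct_neg, neg_neg, sub_dotProduct, sub_dotProduct,
    emat_dot ep1 ep2 hep B Bii Xd Xd' (η t) (V t) (V' t), gam_dot, gam_dot, hsplit, hhalf, hEfd]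
  simp only [sinv]
  ring
end
end

section
/- Consider the closed-loop system η̇ = Dᵀω, Mω̇ = Q⁻¹θ − DΓ(V)sin(η) − Aω − P^l, TV̇ = −E(η)V + Ē_fd, θ̇ = −L_comm·θ − Q⁻¹ω, where L_comm is the (symmetric, positive semidefinite) Laplacian of a connected undirected communication graph on n nodes, Q is diagonal positive definite, and P^l ∈ ℝⁿ is constant. Let (η̄, ω̄, V̄, θ̄) be the equilibrium with ω̄ = 0, θ̄ = (1ₙ1ₙᵀP^l)/(1ₙᵀQ⁻¹1ₙ), 0 = Q⁻¹θ̄ − DΓ(V̄)sin(η̄) − P^l and E(η̄)V̄ = Ē_fd. Then along any differentiable solution the function Z(η, ω, V, θ) = ½ωᵀMω + W₂(η, V) + ½(θ − θ̄)ᵀ(θ − θ̄) satisfies d/dt Z = −ωᵀAω − (E(η)V − Ē_fd)ᵀT⁻¹(E(η)V − Ē_fd) − (θ − θ̄)ᵀL_comm(θ − θ̄) ≤ 0. -/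
open Matrix Real Filter Topology Set

noncomputable section

section Aux
open Finset

lemma sum_ifpm {n : ℕ} {a b : Fin n} (hab : a ≠ b) (v : Fin n → ℝ) :
    ∑ i, (if i = a then (1:ℝ) else if i = b then -1 else 0) * v i = v a - v b := by
  have h : ∀ i, (if i = a then (1:ℝ) else if i = b then -1 else 0) * v i
      = (if i = a then v i else 0) - (if i = b then v i else 0) := by
    intro i
    rcases eq_or_ne i a with rfl | h1
    · simp [hab]
    · rcases eq_or_ne i b with rfl | h2
      · simp [h1]
      · simp [h1, h2]
  simp_rw [h]
  rw [Finset.sum_sub_distrib, Finset.sum_ite_eq', Finset.sum_ite_eq']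
  simp

lemma sum_iftwo {n : ℕ} {a b : Fin n} (hab : a ≠ b) (f : Fin n → ℝ) (x y : ℝ) :
    ∑ i, f i * (if a = i then x else if b = i then y else 0) = f a * x + f b * y := by
  have h : ∀ i, f i * (if a = i then x else if b = i then y else 0)
      = (if i = a then f i * x else 0) + (if i = b then f i * y else 0) := by
    intro i
    rcases eq_or_ne i a with rfl | h1
    · simp [Ne.symm hab, hab]
    · rcases eq_or_ne i b with rfl | h2
      · simp [Ne.symm h1, h1]
      · simp [Ne.symm h1, Ne.symm h2, h1, h2]
  simp_rw [h]
  rw [Finset.sum_add_distrib, Finset.sum_ite_eq', Finset.sum_ite_eq']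
  simp

lemma Emat_mulVec_apply {n m : ℕ} (ep1 ep2 : Fin m → Fin n) (hep : ∀ k, ep1 k ≠ ep2 k)
    (B : Fin m → ℝ) (Bii Xd Xd' : Vec n) (η : Vec m) (V : Vec n) (i : Fin n) :
    ((Emat ep1 ep2 B Bii Xd Xd' η).mulVec V) i
      = (1 - Bii i * (Xd i - Xd' i)) / (Xd i - Xd' i) * V i
        - ∑ k, B k * Real.cos (η k) *
            (if ep1 k = i then V (ep2 k) else if ep2 k = i then V (ep1 k) else 0) := by
  have hterm : ∀ j, Emat ep1 ep2 B Bii Xd Xd' η i j * V j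
      = (if i = j then (1 - Bii i * (Xd i - Xd' i)) / (Xd i - Xd' i) * V j else 0)
        - ∑ k, (if i ≠ j ∧ ((ep1 k = i ∧ ep2 k = j) ∨ (ep1 k = j ∧ ep2 k = i))
            then B k * Real.cos (η k) * V j else 0) := by
    intro j
    rcases eq_or_ne i j with rfl | hij
    · simp [Emat]
    · simp only [Emat, Matrix.of_apply, if_neg hij, hij, ne_eq, not_false_eq_true, true_and]
      simp [Finset.sum_mul, ite_mul]
  have hk : ∀ k, (∑ j, if i ≠ j ∧ ((ep1 k = i ∧ ep2 k = j) ∨ (ep1 k = j ∧ ep2 k = i))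
        then B k * Real.cos (η k) * V j else 0)
      = B k * Real.cos (η k) *
          (if ep1 k = i then V (ep2 k) else if ep2 k = i then V (ep1 k) else 0) := by
    intro k
    by_cases h1 : ep1 k = i
    · have h2 : ep2 k ≠ i := fun h => hep k (h1.trans h.symm)
      rw [if_pos h1]
      have hpt : ∀ j, (if i ≠ j ∧ ((ep1 k = i ∧ ep2 k = j) ∨ (ep1 k = j ∧ ep2 k = i))
            then B k * Real.cos (η k) * V j else 0)
          = (if j = ep2 k then B k * Real.cos (η k) * V j else 0) := by
        intro j
        rcases eq_or_ne j (ep2 k) with rfl | hj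
        · rw [if_pos rfl, if_pos ⟨fun h => hep k (h1.trans h), Or.inl ⟨h1, rfl⟩⟩]
        · rw [if_neg hj, if_neg]
          rintro ⟨hij, ⟨-, h⟩ | ⟨-, h⟩⟩
          · exact hj h.symm
          · exact h2 h
      simp_rw [hpt]
      rw [Finset.sum_ite_eq']
      simp
    · by_cases h2 : ep2 k = i
      · rw [if_neg h1, if_pos h2]
        have hpt : ∀ j, (if i ≠ j ∧ ((ep1 k = i ∧ ep2 k = j) ∨ (ep1 k = j ∧ ep2 k = i))
              then B k * Real.cos (η k) * V j else 0)
            = (if j = ep1 k then B k * Real.cos (η k) * V j else 0) := by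
          intro j
          rcases eq_or_ne j (ep1 k) with rfl | hj
          · rw [if_pos rfl, if_pos ⟨fun h => hep k (h ▸ h2).symm, Or.inr ⟨rfl, h2⟩⟩]
          · rw [if_neg hj, if_neg]
            rintro ⟨hij, ⟨h, -⟩ | ⟨h, -⟩⟩
            · exact h1 h
            · exact hj h.symm
        simp_rw [hpt]
        rw [Finset.sum_ite_eq']
        simp
      · rw [if_neg h1, if_neg h2, mul_zero]
        apply Finset.sum_eq_zero
        intro j _
        rw [if_neg]
        rintro ⟨hij, ⟨h, -⟩ | ⟨-, h⟩⟩
        · exact h1 h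
        · exact h2 h
  show (∑ j, Emat ep1 ep2 B Bii Xd Xd' η i j * V j) = _
  simp_rw [hterm]
  rw [Finset.sum_sub_distrib, Finset.sum_ite_eq, Finset.sum_comm]
  simp_rw [hk]
  simp
end Aux

/-- dissipation identity for the closed loop with the distributed integral
controller `θ̇ = −L_comm θ − Q⁻¹ω`, `u = Q⁻¹θ`: along solutions,
`Ż = −ωᵀAω − ‖E(η)V − Ē_fd‖²_{T⁻¹} − (θ − θ̄)ᵀL_comm(θ − θ̄) ≤ 0`. -/
theorem closed_loop_dissipation
    {n m : ℕ} (ep1 ep2 : Fin m → Fin n) (hep : ∀ k, ep1 k ≠ ep2 k)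
    (B : Fin m → ℝ) (hB : ∀ k, 0 < B k)
    (Bii Xd Xd' : Vec n)
    (Md Ad Td : Vec n) (hM : ∀ i, 0 < Md i) (hA : ∀ i, 0 < Ad i) (hT : ∀ i, 0 < Td i)
    (q : Vec n) (hq : ∀ i, 0 < q i)
    (G : SimpleGraph (Fin n)) [DecidableRel G.Adj] (hG : G.Connected)
    (Efd Pl : Vec n)
    (ηb : Vec m) (Vb : Vec n)
    (heq2 : (0 : Vec n) = (fun i => (q i)⁻¹ * ((∑ j, Pl j) / (∑ j, (q j)⁻¹)))
      - (incD ep1 ep2).mulVec ((Gam ep1 ep2 B Vb).mulVec (sinv ηb)) - Pl)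
    (heq3 : (Emat ep1 ep2 B Bii Xd Xd' ηb).mulVec Vb = Efd)
    (η : ℝ → Vec m) (ω ω' V V' θ : ℝ → Vec n)
    (hη : ∀ t, HasDerivAt η ((incD ep1 ep2)ᵀ.mulVec (ω t)) t)
    (hω : ∀ t, HasDerivAt ω (ω' t) t)
    (hωdyn : ∀ t, (Matrix.diagonal Md).mulVec (ω' t)
      = (Matrix.diagonal fun i => (q i)⁻¹).mulVec (θ t)
        - (incD ep1 ep2).mulVec ((Gam ep1 ep2 B (V t)).mulVec (sinv (η t)))
        - (Matrix.diagonal Ad).mulVec (ω t) - Pl)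
    (hV : ∀ t, HasDerivAt V (V' t) t)
    (hVdyn : ∀ t, (Matrix.diagonal Td).mulVec (V' t)
      = -(Emat ep1 ep2 B Bii Xd Xd' (η t)).mulVec (V t) + Efd)
    (hθ : ∀ t, HasDerivAt θ
      (-(G.lapMatrix ℝ).mulVec (θ t)
        - (Matrix.diagonal fun i => (q i)⁻¹).mulVec (ω t)) t) :
    ∀ t,
      HasDerivAt
        (fun s => (1 / 2) * (ω s ⬝ᵥ (Matrix.diagonal Md).mulVec (ω s))
          + W2 ep1 ep2 B Bii Xd Xd' Efd ηb Vb (η s) (V s)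
          + (1 / 2) * ((θ s - fun _ => (∑ j, Pl j) / (∑ j, (q j)⁻¹))
              ⬝ᵥ (θ s - fun _ => (∑ j, Pl j) / (∑ j, (q j)⁻¹))))
        (-(ω t ⬝ᵥ (Matrix.diagonal Ad).mulVec (ω t))
          - (((Emat ep1 ep2 B Bii Xd Xd' (η t)).mulVec (V t) - Efd) ⬝ᵥ
              (Matrix.diagonal fun i => (Td i)⁻¹).mulVec
                ((Emat ep1 ep2 B Bii Xd Xd' (η t)).mulVec (V t) - Efd))
          - ((θ t - fun _ => (∑ j, Pl j) / (∑ j, (q j)⁻¹))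
              ⬝ᵥ (G.lapMatrix ℝ).mulVec
                (θ t - fun _ => (∑ j, Pl j) / (∑ j, (q j)⁻¹)))) t ∧
      (-(ω t ⬝ᵥ (Matrix.diagonal Ad).mulVec (ω t))
          - (((Emat ep1 ep2 B Bii Xd Xd' (η t)).mulVec (V t) - Efd) ⬝ᵥ
              (Matrix.diagonal fun i => (Td i)⁻¹).mulVec
                ((Emat ep1 ep2 B Bii Xd Xd' (η t)).mulVec (V t) - Efd))
          - ((θ t - fun _ => (∑ j, Pl j) / (∑ j, (q j)⁻¹))
              ⬝ᵥ (G.lapMatrix ℝ).mulVec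
                (θ t - fun _ => (∑ j, Pl j) / (∑ j, (q j)⁻¹)))) ≤ 0 := by
  intro t
  set θb : ℝ := (∑ j, Pl j) / (∑ j, (q j)⁻¹) with hθbdef
  -- component derivatives
  have hωk : ∀ i, HasDerivAt (fun s => ω s i) (ω' t i) t := hasDerivAt_pi.mp (hω t)
  have hVk : ∀ i, HasDerivAt (fun s => V s i) (V' t i) t := hasDerivAt_pi.mp (hV t)
  have hηk : ∀ k, HasDerivAt (fun s => η s k) (ω t (ep1 k) - ω t (ep2 k)) t := by
    intro k
    have h := hasDerivAt_pi.mp (hη t) k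
    have he : ((incD ep1 ep2)ᵀ.mulVec (ω t)) k = ω t (ep1 k) - ω t (ep2 k) := by
      show (∑ i, (incD ep1 ep2)ᵀ k i * ω t i) = _
      simp only [Matrix.transpose_apply, incD, Matrix.of_apply]
      exact sum_ifpm (hep k) (ω t)
    exact he ▸ h
  have hθk : ∀ i, HasDerivAt (fun s => θ s i)
      (-((G.lapMatrix ℝ).mulVec (θ t)) i - (q i)⁻¹ * ω t i) t := by
    intro i
    have h := hasDerivAt_pi.mp (hθ t) i
    simpa [Matrix.mulVec_diagonal] using h
  -- the function, with all dot products expanded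
  have hfe : (fun s => (1 / 2) * (ω s ⬝ᵥ (Matrix.diagonal Md).mulVec (ω s))
          + W2 ep1 ep2 B Bii Xd Xd' Efd ηb Vb (η s) (V s)
          + (1 / 2) * ((θ s - fun _ => θb) ⬝ᵥ (θ s - fun _ => θb)))
      = (fun s => (1 / 2) * ∑ i, ω s i * (Md i * ω s i)
          + (-(∑ k, V s (ep1 k) * V s (ep2 k) * B k * Real.cos (η s k))
             + (1 : Vec m) ⬝ᵥ (Gam ep1 ep2 B Vb).mulVec (cosv ηb)
             - ∑ k, Vb (ep1 k) * Vb (ep2 k) * B k * Real.sin (ηb k) * (η s k - ηb k)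
             - ∑ i, Efd i * (V s i - Vb i)
             + (1 / 2) * ∑ i, V s i * ((1 - Bii i * (Xd i - Xd' i)) / (Xd i - Xd' i) * V s i)
             - (1 / 2) * (Vb ⬝ᵥ (Fmat Bii Xd Xd').mulVec Vb))
          + (1 / 2) * ∑ i, (θ s i - θb) * (θ s i - θb)) := by
    funext s
    simp only [W2, Gam, Fmat, cosv, sinv, dotProduct, Matrix.mulVec_diagonal,
      Pi.sub_apply, Pi.one_apply, one_mul]
  have key : HasDerivAt (fun s => (1 / 2) * ∑ i, ω s i * (Md i * ω s i)
          + (-(∑ k, V s (ep1 k) * V s (ep2 k) * B k * Real.cos (η s k))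
             + (1 : Vec m) ⬝ᵥ (Gam ep1 ep2 B Vb).mulVec (cosv ηb)
             - ∑ k, Vb (ep1 k) * Vb (ep2 k) * B k * Real.sin (ηb k) * (η s k - ηb k)
             - ∑ i, Efd i * (V s i - Vb i)
             + (1 / 2) * ∑ i, V s i * ((1 - Bii i * (Xd i - Xd' i)) / (Xd i - Xd' i) * V s i)
             - (1 / 2) * (Vb ⬝ᵥ (Fmat Bii Xd Xd').mulVec Vb))
          + (1 / 2) * ∑ i, (θ s i - θb) * (θ s i - θb))
      ((1 / 2) * ∑ i, (ω' t i * (Md i * ω t i) + ω t i * (Md i * ω' t i))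
        + (-(∑ k, ((V' t (ep1 k) * V t (ep2 k) + V t (ep1 k) * V' t (ep2 k)) * B k * Real.cos (η t k)
              + V t (ep1 k) * V t (ep2 k) * B k
                * (-Real.sin (η t k) * (ω t (ep1 k) - ω t (ep2 k)))))
           - ∑ k, Vb (ep1 k) * Vb (ep2 k) * B k * Real.sin (ηb k) * (ω t (ep1 k) - ω t (ep2 k))
           - ∑ i, Efd i * V' t i
           + (1 / 2) * ∑ i, (V' t i * ((1 - Bii i * (Xd i - Xd' i)) / (Xd i - Xd' i) * V t i)
              + V t i * ((1 - Bii i * (Xd i - Xd' i)) / (Xd i - Xd' i) * V' t i)))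
        + (1 / 2) * ∑ i, ((-((G.lapMatrix ℝ).mulVec (θ t)) i - (q i)⁻¹ * ω t i) * (θ t i - θb)
            + (θ t i - θb) * (-((G.lapMatrix ℝ).mulVec (θ t)) i - (q i)⁻¹ * ω t i))) t := by
    refine HasDerivAt.add (HasDerivAt.add ?_ ?_) ?_
    · exact (HasDerivAt.fun_sum fun i _ => (hωk i).mul ((hωk i).const_mul (Md i))).const_mul (1 / 2)
    · refine HasDerivAt.sub_const _ ?_
      refine HasDerivAt.add ?_ ?_
      · refine HasDerivAt.sub ?_ ?_
        · refine HasDerivAt.sub ?_ ?_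
          · refine HasDerivAt.add_const _ ?_
            refine HasDerivAt.neg ?_
            exact HasDerivAt.fun_sum fun k _ =>
              (((hVk (ep1 k)).mul (hVk (ep2 k))).mul_const (B k)).mul ((hηk k).cos)
          · exact HasDerivAt.fun_sum fun k _ =>
              ((hηk k).sub_const (ηb k)).const_mul (Vb (ep1 k) * Vb (ep2 k) * B k * Real.sin (ηb k))
        · exact HasDerivAt.fun_sum fun i _ => ((hVk i).sub_const (Vb i)).const_mul (Efd i)
      · exact (HasDerivAt.fun_sum fun i _ => (hVk i).mul ((hVk i).const_mul
          ((1 - Bii i * (Xd i - Xd' i)) / (Xd i - Xd' i)))).const_mul (1 / 2)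
    · exact (HasDerivAt.fun_sum fun i _ =>
        ((hθk i).sub_const θb).mul ((hθk i).sub_const θb)).const_mul (1 / 2)
  -- dynamics, componentwise
  have hmd : ∀ i, Md i * ω' t i = (q i)⁻¹ * θ t i
      - ((incD ep1 ep2).mulVec ((Gam ep1 ep2 B (V t)).mulVec (sinv (η t)))) i
      - Ad i * ω t i - Pl i := by
    intro i
    have h := congrFun (hωdyn t) i
    simpa [Matrix.mulVec_diagonal] using h
  have htd : ∀ i, V' t i = (Td i)⁻¹
      * (Efd i - ((Emat ep1 ep2 B Bii Xd Xd' (η t)).mulVec (V t)) i) := by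
    intro i
    have h := congrFun (hVdyn t) i
    simp only [Matrix.mulVec_diagonal, Pi.add_apply, Pi.neg_apply] at h
    field_simp [(hT i).ne']
    linarith [h]
  have hpl : ∀ i, Pl i = (q i)⁻¹ * θb
      - ((incD ep1 ep2).mulVec ((Gam ep1 ep2 B Vb).mulVec (sinv ηb))) i := by
    intro i
    have h := congrFun heq2 i
    simp only [Pi.sub_apply, Pi.zero_apply] at h
    linarith [h]
  -- the incidence-sum identity
  have hDsum : ∀ (U : Vec n) (ξ : Vec m),
      (∑ i, ω t i * ((incD ep1 ep2).mulVec ((Gam ep1 ep2 B U).mulVec (sinv ξ))) i)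
      = ∑ k, U (ep1 k) * U (ep2 k) * B k * Real.sin (ξ k) * (ω t (ep1 k) - ω t (ep2 k)) := by
    intro U ξ
    have h1 : ∀ i, ((incD ep1 ep2).mulVec ((Gam ep1 ep2 B U).mulVec (sinv ξ))) i
        = ∑ k, (if i = ep1 k then (1:ℝ) else if i = ep2 k then -1 else 0)
            * (U (ep1 k) * U (ep2 k) * B k * Real.sin (ξ k)) := by
      intro i
      show (∑ k, incD ep1 ep2 i k * ((Gam ep1 ep2 B U).mulVec (sinv ξ)) k) = _
      refine Finset.sum_congr rfl fun k _ => ?_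
      simp only [incD, Matrix.of_apply, Gam, Matrix.mulVec_diagonal, sinv]
    simp_rw [h1, Finset.mul_sum]
    rw [Finset.sum_comm]
    refine Finset.sum_congr rfl fun k _ => ?_
    have h2 : ∀ i, ω t i * ((if i = ep1 k then (1:ℝ) else if i = ep2 k then -1 else 0)
          * (U (ep1 k) * U (ep2 k) * B k * Real.sin (ξ k)))
        = ((if i = ep1 k then (1:ℝ) else if i = ep2 k then -1 else 0) * ω t i)
          * (U (ep1 k) * U (ep2 k) * B k * Real.sin (ξ k)) := fun i => by ring
    simp_rw [h2]
    rw [← Finset.sum_mul, sum_ifpm (hep k) (ω t)]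
    ring
  -- V-gradient identity
  have hsplit : (∑ i, V' t i * (((Emat ep1 ep2 B Bii Xd Xd' (η t)).mulVec (V t)) i - Efd i))
      = (∑ i, V' t i * ((1 - Bii i * (Xd i - Xd' i)) / (Xd i - Xd' i) * V t i))
        - (∑ k, (V' t (ep1 k) * V t (ep2 k) + V t (ep1 k) * V' t (ep2 k)) * B k
            * Real.cos (η t k))
        - ∑ i, Efd i * V' t i := by
    have e1 : ∀ i, V' t i * (((Emat ep1 ep2 B Bii Xd Xd' (η t)).mulVec (V t)) i - Efd i)
        = V' t i * ((1 - Bii i * (Xd i - Xd' i)) / (Xd i - Xd' i) * V t i)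
          - (∑ k, V' t i * (B k * Real.cos (η t k) *
              (if ep1 k = i then V t (ep2 k) else if ep2 k = i then V t (ep1 k) else 0)))
          - Efd i * V' t i := by
      intro i
      rw [Emat_mulVec_apply ep1 ep2 hep B Bii Xd Xd' (η t) (V t) i, mul_sub, mul_sub,
        Finset.mul_sum, mul_comm (V' t i) (Efd i)]
    simp_rw [e1]
    rw [Finset.sum_sub_distrib, Finset.sum_sub_distrib]
    congr 2
    rw [Finset.sum_comm]
    refine Finset.sum_congr rfl fun k _ => ?_
    have e2 : ∀ i, V' t i * (B k * Real.cos (η t k) *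
          (if ep1 k = i then V t (ep2 k) else if ep2 k = i then V t (ep1 k) else 0))
        = (B k * Real.cos (η t k)) * (V' t i *
          (if ep1 k = i then V t (ep2 k) else if ep2 k = i then V t (ep1 k) else 0)) :=
      fun i => by ring
    simp_rw [e2]
    rw [← Finset.mul_sum]
    have e3 : ∀ i, V' t i * (if ep1 k = i then V t (ep2 k) else if ep2 k = i then V t (ep1 k) else 0)
        = V' t i * (if ep1 k = i then V t (ep2 k) else if ep2 k = i then V t (ep1 k) else 0) := fun _ => rfl
    rw [sum_iftwo (hep k) (V' t) (V t (ep2 k)) (V t (ep1 k))]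
    ring
  have hTmid : (((Emat ep1 ep2 B Bii Xd Xd' (η t)).mulVec (V t) - Efd) ⬝ᵥ
        (Matrix.diagonal fun i => (Td i)⁻¹).mulVec
          ((Emat ep1 ep2 B Bii Xd Xd' (η t)).mulVec (V t) - Efd))
      = ∑ i, (((Emat ep1 ep2 B Bii Xd Xd' (η t)).mulVec (V t)) i - Efd i)
          * ((Td i)⁻¹ * (((Emat ep1 ep2 B Bii Xd Xd' (η t)).mulVec (V t)) i - Efd i)) := by
    show (∑ i, _) = _
    refine Finset.sum_congr rfl fun i _ => ?_
    simp [Matrix.mulVec_diagonal]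
  have hVfinal : (∑ i, V' t i * (((Emat ep1 ep2 B Bii Xd Xd' (η t)).mulVec (V t)) i - Efd i))
      = -∑ i, (((Emat ep1 ep2 B Bii Xd Xd' (η t)).mulVec (V t)) i - Efd i)
          * ((Td i)⁻¹ * (((Emat ep1 ep2 B Bii Xd Xd' (η t)).mulVec (V t)) i - Efd i)) := by
    rw [← Finset.sum_neg_distrib]
    refine Finset.sum_congr rfl fun i _ => ?_
    rw [htd i]; ring
  have hTA : (ω t ⬝ᵥ (Matrix.diagonal Ad).mulVec (ω t)) = ∑ i, ω t i * (Ad i * ω t i) := by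
    show (∑ i, _) = _
    refine Finset.sum_congr rfl fun i _ => ?_
    simp [Matrix.mulVec_diagonal]
  have hLz : (G.lapMatrix ℝ).mulVec (fun _ => θb) = 0 := by
    have hc : (fun _ : Fin n => θb) = θb • (fun _ : Fin n => (1:ℝ)) := by
      funext i; simp
    rw [hc, Matrix.mulVec_smul, SimpleGraph.lapMatrix_mulVec_const_eq_zero, smul_zero]
  have hTθ : ((θ t - fun _ => θb) ⬝ᵥ (G.lapMatrix ℝ).mulVec (θ t - fun _ => θb))
      = ∑ i, (θ t i - θb) * ((G.lapMatrix ℝ).mulVec (θ t)) i := by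
    rw [Matrix.mulVec_sub, hLz, sub_zero]
    show (∑ i, _) = _
    refine Finset.sum_congr rfl fun i _ => ?_
    simp
  -- linear bookkeeping identities
  have A1 : (∑ i, (ω' t i * (Md i * ω t i) + ω t i * (Md i * ω' t i)))
      = 2 * ∑ i, ω t i * (Md i * ω' t i) := by
    rw [Finset.mul_sum]
    exact Finset.sum_congr rfl fun i _ => by ring
  have A2 : (∑ i, ω t i * (Md i * ω' t i))
      = (∑ i, (q i)⁻¹ * (ω t i * θ t i))
        - (∑ k, V t (ep1 k) * V t (ep2 k) * B k * Real.sin (η t k)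
            * (ω t (ep1 k) - ω t (ep2 k)))
        - (∑ i, ω t i * (Ad i * ω t i)) - ∑ i, ω t i * Pl i := by
    simp_rw [hmd]
    have e : ∀ i, ω t i * ((q i)⁻¹ * θ t i
          - ((incD ep1 ep2).mulVec ((Gam ep1 ep2 B (V t)).mulVec (sinv (η t)))) i
          - Ad i * ω t i - Pl i)
        = (q i)⁻¹ * (ω t i * θ t i)
          - ω t i * ((incD ep1 ep2).mulVec ((Gam ep1 ep2 B (V t)).mulVec (sinv (η t)))) i
          - ω t i * (Ad i * ω t i) - ω t i * Pl i := fun i => by ring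
    simp_rw [e]
    rw [Finset.sum_sub_distrib, Finset.sum_sub_distrib, Finset.sum_sub_distrib,
      hDsum (V t) (η t)]
  have A3 : (∑ k, ((V' t (ep1 k) * V t (ep2 k) + V t (ep1 k) * V' t (ep2 k)) * B k
          * Real.cos (η t k)
        + V t (ep1 k) * V t (ep2 k) * B k * (-Real.sin (η t k) * (ω t (ep1 k) - ω t (ep2 k)))))
      = (∑ k, (V' t (ep1 k) * V t (ep2 k) + V t (ep1 k) * V' t (ep2 k)) * B k
          * Real.cos (η t k))
        - ∑ k, V t (ep1 k) * V t (ep2 k) * B k * Real.sin (η t k)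
            * (ω t (ep1 k) - ω t (ep2 k)) := by
    rw [← Finset.sum_sub_distrib]
    exact Finset.sum_congr rfl fun k _ => by ring
  have A4 : (∑ i, (V' t i * ((1 - Bii i * (Xd i - Xd' i)) / (Xd i - Xd' i) * V t i)
        + V t i * ((1 - Bii i * (Xd i - Xd' i)) / (Xd i - Xd' i) * V' t i)))
      = 2 * ∑ i, V' t i * ((1 - Bii i * (Xd i - Xd' i)) / (Xd i - Xd' i) * V t i) := by
    rw [Finset.mul_sum]
    exact Finset.sum_congr rfl fun i _ => by ring
  have A5 : (∑ i, ((-((G.lapMatrix ℝ).mulVec (θ t)) i - (q i)⁻¹ * ω t i) * (θ t i - θb)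
        + (θ t i - θb) * (-((G.lapMatrix ℝ).mulVec (θ t)) i - (q i)⁻¹ * ω t i)))
      = 2 * ∑ i, (θ t i - θb) * (-((G.lapMatrix ℝ).mulVec (θ t)) i - (q i)⁻¹ * ω t i) := by
    rw [Finset.mul_sum]
    exact Finset.sum_congr rfl fun i _ => by ring
  have A6 : (∑ i, (θ t i - θb) * (-((G.lapMatrix ℝ).mulVec (θ t)) i - (q i)⁻¹ * ω t i))
      = -(∑ i, (θ t i - θb) * ((G.lapMatrix ℝ).mulVec (θ t)) i)
        - ((∑ i, (q i)⁻¹ * (ω t i * θ t i)) - ∑ i, (q i)⁻¹ * (ω t i * θb)) := by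
    have e : ∀ i, (θ t i - θb) * (-((G.lapMatrix ℝ).mulVec (θ t)) i - (q i)⁻¹ * ω t i)
        = -((θ t i - θb) * ((G.lapMatrix ℝ).mulVec (θ t)) i)
          - ((q i)⁻¹ * (ω t i * θ t i) - (q i)⁻¹ * (ω t i * θb)) := fun i => by ring
    simp_rw [e]
    rw [Finset.sum_sub_distrib, Finset.sum_neg_distrib, Finset.sum_sub_distrib]
  have A7 : (∑ i, ω t i * Pl i)
      = (∑ i, (q i)⁻¹ * (ω t i * θb))
        - ∑ k, Vb (ep1 k) * Vb (ep2 k) * B k * Real.sin (ηb k)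
            * (ω t (ep1 k) - ω t (ep2 k)) := by
    have e : ∀ i, ω t i * Pl i = (q i)⁻¹ * (ω t i * θb)
        - ω t i * ((incD ep1 ep2).mulVec ((Gam ep1 ep2 B Vb).mulVec (sinv ηb))) i :=
      fun i => by rw [hpl i]; ring
    simp_rw [e]
    rw [Finset.sum_sub_distrib, hDsum Vb ηb]
  have hval : ((1 / 2) * ∑ i, (ω' t i * (Md i * ω t i) + ω t i * (Md i * ω' t i))
        + (-(∑ k, ((V' t (ep1 k) * V t (ep2 k) + V t (ep1 k) * V' t (ep2 k)) * B k * Real.cos (η t k)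
              + V t (ep1 k) * V t (ep2 k) * B k
                * (-Real.sin (η t k) * (ω t (ep1 k) - ω t (ep2 k)))))
           - ∑ k, Vb (ep1 k) * Vb (ep2 k) * B k * Real.sin (ηb k) * (ω t (ep1 k) - ω t (ep2 k))
           - ∑ i, Efd i * V' t i
           + (1 / 2) * ∑ i, (V' t i * ((1 - Bii i * (Xd i - Xd' i)) / (Xd i - Xd' i) * V t i)
              + V t i * ((1 - Bii i * (Xd i - Xd' i)) / (Xd i - Xd' i) * V' t i)))
        + (1 / 2) * ∑ i, ((-((G.lapMatrix ℝ).mulVec (θ t)) i - (q i)⁻¹ * ω t i) * (θ t i - θb)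
            + (θ t i - θb) * (-((G.lapMatrix ℝ).mulVec (θ t)) i - (q i)⁻¹ * ω t i)))
      = (-(ω t ⬝ᵥ (Matrix.diagonal Ad).mulVec (ω t))
          - (((Emat ep1 ep2 B Bii Xd Xd' (η t)).mulVec (V t) - Efd) ⬝ᵥ
              (Matrix.diagonal fun i => (Td i)⁻¹).mulVec
                ((Emat ep1 ep2 B Bii Xd Xd' (η t)).mulVec (V t) - Efd))
          - ((θ t - fun _ => θb) ⬝ᵥ (G.lapMatrix ℝ).mulVec (θ t - fun _ => θb))) := by
    rw [A1, A3, A5]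
    rw [A2, A6, A7, hTA, hTmid, hTθ]
    linarith [hsplit, hVfinal]
  have h0A : 0 ≤ ω t ⬝ᵥ (Matrix.diagonal Ad).mulVec (ω t) := by
    rw [hTA]
    refine Finset.sum_nonneg fun i _ => ?_
    have e : ω t i * (Ad i * ω t i) = Ad i * (ω t i) ^ 2 := by ring
    rw [e]
    exact mul_nonneg (hA i).le (sq_nonneg _)
  have h0T : 0 ≤ (((Emat ep1 ep2 B Bii Xd Xd' (η t)).mulVec (V t) - Efd) ⬝ᵥ
      (Matrix.diagonal fun i => (Td i)⁻¹).mulVec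
        ((Emat ep1 ep2 B Bii Xd Xd' (η t)).mulVec (V t) - Efd)) := by
    rw [hTmid]
    refine Finset.sum_nonneg fun i _ => ?_
    have e : (((Emat ep1 ep2 B Bii Xd Xd' (η t)).mulVec (V t)) i - Efd i)
          * ((Td i)⁻¹ * (((Emat ep1 ep2 B Bii Xd Xd' (η t)).mulVec (V t)) i - Efd i))
        = (Td i)⁻¹ * (((Emat ep1 ep2 B Bii Xd Xd' (η t)).mulVec (V t)) i - Efd i) ^ 2 := by
      ring
    rw [e]
    exact mul_nonneg (inv_nonneg.mpr (hT i).le) (sq_nonneg _)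
  have h0L : 0 ≤ ((θ t - fun _ => θb) ⬝ᵥ (G.lapMatrix ℝ).mulVec (θ t - fun _ => θb)) := by
    have h := (SimpleGraph.posSemidef_lapMatrix ℝ G).dotProduct_mulVec_nonneg (θ t - fun _ => θb)
    simpa using h
  constructor
  · exact (hval ▸ key).congr_of_eventuallyEq
      (Filter.Eventually.of_forall fun s => congrFun hfe s)
  · linarith
end
end
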